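/- Let r1, r2, r3 > 0 be real numbers and α1, α2 ∈ ℚ. Then M(t) ≤ r1 + r2 + r3 for all t ∈ ℝ, and M(t) = r1 + r2 + r3 if and only if t = 2mπ + 2m1 α1 π + 2m2 α2 π for some integers m, m1, m2. -/

import Mathlib

noncomputable section

open Real

/-- `M t = sup_{θ₁, θ₂ ∈ ℝ} [ r₁ cos θ₁ + r₂ cos θ₂ + r₃ cos(α₁ θ₁ + α₂ θ₂ + t) ]`. -/
def M (r1 r2 r3 : ℝ) (α1 α2 : ℚ) (t : ℝ) : ℝ :=
  sSup {v : ℝ | ∃ θ1 θ2 : ℝ,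
    v = r1 * cos θ1 + r2 * cos θ2 + r3 * cos ((α1 : ℝ) * θ1 + (α2 : ℝ) * θ2 + t)}

/-- Auxiliary function. -/
def Faux (r1 r2 r3 : ℝ) (α1 α2 : ℚ) (t θ1 θ2 : ℝ) : ℝ :=
  r1 * cos θ1 + r2 * cos θ2 + r3 * cos ((α1 : ℝ) * θ1 + (α2 : ℝ) * θ2 + t)

lemma Faux_shift (r1 r2 r3 : ℝ) (α1 α2 : ℚ) (t x1 x2 : ℝ) (k1 k2 : ℤ) :
    Faux r1 r2 r3 α1 α2 t (x1 - k1 * (2 * π * (α1.den * α2.den)))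
      (x2 - k2 * (2 * π * (α1.den * α2.den))) = Faux r1 r2 r3 α1 α2 t x1 x2 := by
  unfold Faux
  have hd1 : ((α1.den : ℝ)) ≠ 0 := Nat.cast_ne_zero.2 α1.den_nz
  have hd2 : ((α2.den : ℝ)) ≠ 0 := Nat.cast_ne_zero.2 α2.den_nz
  have e1 : x1 - k1 * (2 * π * (α1.den * α2.den))
      = x1 + ((-(k1 * α1.den * α2.den) : ℤ) : ℝ) * (2 * π) := by push_cast; ring
  have e2 : x2 - k2 * (2 * π * (α1.den * α2.den))
      = x2 + ((-(k2 * α1.den * α2.den) : ℤ) : ℝ) * (2 * π) := by push_cast; ring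
  have hc1 : (α1 : ℝ) = (α1.num : ℝ) / (α1.den : ℝ) := by rw [Rat.cast_def]
  have hc2 : (α2 : ℝ) = (α2.num : ℝ) / (α2.den : ℝ) := by rw [Rat.cast_def]
  have e3 : (α1 : ℝ) * (x1 - k1 * (2 * π * (α1.den * α2.den)))
      + (α2 : ℝ) * (x2 - k2 * (2 * π * (α1.den * α2.den))) + t
      = ((α1 : ℝ) * x1 + (α2 : ℝ) * x2 + t)
        + ((-(k1 * α1.num * α2.den + k2 * α2.num * α1.den) : ℤ) : ℝ) * (2 * π) := by
    rw [hc1, hc2]; push_cast; field_simp; ring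
  rw [e3, e1, e2, cos_add_int_mul_two_pi, cos_add_int_mul_two_pi, cos_add_int_mul_two_pi]

lemma Faux_max (r1 r2 r3 : ℝ) (α1 α2 : ℚ) (t : ℝ) :
    ∃ θ1 θ2 : ℝ, ∀ x1 x2 : ℝ,
      Faux r1 r2 r3 α1 α2 t x1 x2 ≤ Faux r1 r2 r3 α1 α2 t θ1 θ2 := by
  set T : ℝ := 2 * π * (α1.den * α2.den) with hT
  have hTpos : 0 < T := by
    have : (0:ℝ) < (α1.den : ℝ) * (α2.den : ℝ) := by
      positivity
    have hpi := Real.pi_pos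
    positivity
  have hcont : ContinuousOn (fun p : ℝ × ℝ => Faux r1 r2 r3 α1 α2 t p.1 p.2)
      (Set.Icc 0 T ×ˢ Set.Icc 0 T) := by
    apply Continuous.continuousOn
    unfold Faux
    fun_prop
  have hK : IsCompact (Set.Icc (0:ℝ) T ×ˢ Set.Icc (0:ℝ) T) :=
    (isCompact_Icc).prod isCompact_Icc
  have hne : (Set.Icc (0:ℝ) T ×ˢ Set.Icc (0:ℝ) T).Nonempty :=
    ⟨(0, 0), ⟨⟨le_refl _, hTpos.le⟩, ⟨le_refl _, hTpos.le⟩⟩⟩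
  obtain ⟨⟨θ1, θ2⟩, _, hmax⟩ := hK.exists_isMaxOn hne hcont
  rw [isMaxOn_iff] at hmax
  refine ⟨θ1, θ2, fun x1 x2 => ?_⟩
  -- reduce x1, x2 mod T
  have hred : ∀ x : ℝ, x - ⌊x / T⌋ * T ∈ Set.Icc 0 T := by
    intro x
    have h1 : (0:ℝ) ≤ Int.fract (x / T) := Int.fract_nonneg _
    have h2 : Int.fract (x / T) < 1 := Int.fract_lt_one _
    have he : x - ⌊x / T⌋ * T = Int.fract (x / T) * T := by
      rw [Int.fract]; field_simp
    rw [he]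
    constructor
    · positivity
    · nlinarith
  have := hmax (x1 - ⌊x1 / T⌋ * T, x2 - ⌊x2 / T⌋ * T) ⟨hred x1, hred x2⟩
  exact (Faux_shift r1 r2 r3 α1 α2 t x1 x2 ⌊x1 / T⌋ ⌊x2 / T⌋).symm.trans_le this

theorem stmt2 (r1 r2 r3 : ℝ) (hr1 : 0 < r1) (hr2 : 0 < r2) (hr3 : 0 < r3)
    (α1 α2 : ℚ) :
    (∀ t : ℝ, M r1 r2 r3 α1 α2 t ≤ r1 + r2 + r3) ∧
    (∀ t : ℝ, M r1 r2 r3 α1 α2 t = r1 + r2 + r3 ↔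
      ∃ m m1 m2 : ℤ, t = 2 * (m : ℝ) * π + 2 * (m1 : ℝ) * (α1 : ℝ) * π
        + 2 * (m2 : ℝ) * (α2 : ℝ) * π) := by
  have hbd : ∀ t : ℝ, ∀ v ∈ {v : ℝ | ∃ θ1 θ2 : ℝ,
      v = r1 * cos θ1 + r2 * cos θ2 + r3 * cos ((α1 : ℝ) * θ1 + (α2 : ℝ) * θ2 + t)},
      v ≤ r1 + r2 + r3 := by
    rintro t v ⟨θ1, θ2, rfl⟩
    nlinarith [cos_le_one θ1, cos_le_one θ2,
      cos_le_one ((α1 : ℝ) * θ1 + (α2 : ℝ) * θ2 + t)]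
  have hne : ∀ t : ℝ, {v : ℝ | ∃ θ1 θ2 : ℝ,
      v = r1 * cos θ1 + r2 * cos θ2 + r3 * cos ((α1 : ℝ) * θ1 + (α2 : ℝ) * θ2 + t)}.Nonempty :=
    fun t => ⟨_, 0, 0, rfl⟩
  have hub : ∀ t : ℝ, M r1 r2 r3 α1 α2 t ≤ r1 + r2 + r3 :=
    fun t => csSup_le (hne t) (hbd t)
  refine ⟨hub, fun t => ⟨?_, ?_⟩⟩
  · -- forward direction
    intro hMt
    obtain ⟨θ1, θ2, hmax⟩ := Faux_max r1 r2 r3 α1 α2 t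
    have hmem : Faux r1 r2 r3 α1 α2 t θ1 θ2 ∈ {v : ℝ | ∃ a b : ℝ,
        v = r1 * cos a + r2 * cos b + r3 * cos ((α1 : ℝ) * a + (α2 : ℝ) * b + t)} :=
      ⟨θ1, θ2, rfl⟩
    have hval : Faux r1 r2 r3 α1 α2 t θ1 θ2 = r1 + r2 + r3 := by
      have hle : Faux r1 r2 r3 α1 α2 t θ1 θ2 ≤ r1 + r2 + r3 := hbd t _ hmem
      have hge : M r1 r2 r3 α1 α2 t ≤ Faux r1 r2 r3 α1 α2 t θ1 θ2 := by
        apply csSup_le (hne t)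
        rintro v ⟨a, b, rfl⟩
        exact hmax a b
      have h' : r1 + r2 + r3 ≤ Faux r1 r2 r3 α1 α2 t θ1 θ2 := hMt ▸ hge
      linarith
    unfold Faux at hval
    have h1 : cos θ1 = 1 := by
      nlinarith [cos_le_one θ1, cos_le_one θ2,
        cos_le_one ((α1 : ℝ) * θ1 + (α2 : ℝ) * θ2 + t)]
    have h2 : cos θ2 = 1 := by
      nlinarith [cos_le_one θ1, cos_le_one θ2,
        cos_le_one ((α1 : ℝ) * θ1 + (α2 : ℝ) * θ2 + t)]
    have h3 : cos ((α1 : ℝ) * θ1 + (α2 : ℝ) * θ2 + t) = 1 := by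
      nlinarith [cos_le_one θ1, cos_le_one θ2,
        cos_le_one ((α1 : ℝ) * θ1 + (α2 : ℝ) * θ2 + t)]
    obtain ⟨n1, hn1⟩ := (cos_eq_one_iff θ1).1 h1
    obtain ⟨n2, hn2⟩ := (cos_eq_one_iff θ2).1 h2
    obtain ⟨n3, hn3⟩ := (cos_eq_one_iff _).1 h3
    refine ⟨n3, -n1, -n2, ?_⟩
    have : (α1 : ℝ) * θ1 + (α2 : ℝ) * θ2 + t = n3 * (2 * π) := hn3.symm
    rw [← hn1, ← hn2] at this
    push_cast
    linarith [this]
  · -- backward direction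
    rintro ⟨m, m1, m2, rfl⟩
    apply le_antisymm (hub _)
    apply le_csSup ⟨r1 + r2 + r3, hbd _⟩
    refine ⟨-(2 * m1 * π), -(2 * m2 * π), ?_⟩
    have e1 : cos (-(2 * (m1:ℝ) * π)) = 1 := by
      rw [cos_eq_one_iff]; exact ⟨-m1, by push_cast; ring⟩
    have e2 : cos (-(2 * (m2:ℝ) * π)) = 1 := by
      rw [cos_eq_one_iff]; exact ⟨-m2, by push_cast; ring⟩
    have e3 : cos ((α1 : ℝ) * -(2 * (m1:ℝ) * π) + (α2 : ℝ) * -(2 * (m2:ℝ) * π)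
        + (2 * (m:ℝ) * π + 2 * (m1:ℝ) * (α1:ℝ) * π + 2 * (m2:ℝ) * (α2:ℝ) * π)) = 1 := by
      rw [cos_eq_one_iff]; exact ⟨m, by ring⟩
    rw [e1, e2, e3]
    ring
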